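/- Let f ∈ F²_d be NC outer and let 0 ≤ r < 1. Suppose T is a bounded operator on F²_d acting as left multiplication by the r-rescaled power series of f, i.e. for all words β, γ: ⟪e_γ, T e_β⟫ = r^{|α|}·f(α) whenever γ = α·β for a (necessarily unique) word α, and ⟪e_γ, T e_β⟫ = 0 whenever γ has no factorization γ = α·β. Then T is invertible in the ring of bounded operators on F²_d (IsUnit T). -/

import Mathlib

noncomputable section

open scoped ComplexConjugate
open Matrix
open scoped ComplexOrder

abbrev Word (d : ℕ) := FreeMonoid (Fin d)

instance {d : ℕ} : DecidableEq (Word d) :=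
  fun a b => decidable_of_iff (FreeMonoid.toList a = FreeMonoid.toList b)
    FreeMonoid.toList.injective.eq_iff

abbrev Fock (d : ℕ) := lp (fun _ : Word d => ℂ) 2

abbrev fockBasis (d : ℕ) (α : Word d) : Fock d := lp.single 2 α (1 : ℂ)

/-- Product of the matrices `Z i` along the word `α`. -/
def wordProdM {d : ℕ} {n : Type} [Fintype n] [DecidableEq n]
    (Z : Fin d → Matrix n n ℂ) (α : Word d) : Matrix n n ℂ :=
  (α.toList.map Z).prod

/-- Evaluation of a power series with coefficients `c` at the matrix tuple `Z`. -/
def evalM {d : ℕ} {n : Type} [Fintype n] [DecidableEq n]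
    (c : Word d → ℂ) (Z : Fin d → Matrix n n ℂ) : Matrix n n ℂ :=
  ∑' α : Word d, c α • wordProdM Z α

def IsStrictRowContraction {d : ℕ} {n : Type} [Fintype n] [DecidableEq n]
    (Z : Fin d → Matrix n n ℂ) : Prop :=
  (1 - ∑ i, Z i * (Z i)ᴴ).PosDef

abbrev L2N := lp (fun _ : ℕ => ℂ) 2

def wordProdO {d : ℕ} (Z : Fin d → (L2N →L[ℂ] L2N)) (α : Word d) : L2N →L[ℂ] L2N :=
  (α.toList.map Z).prod

def evalO {d : ℕ} (c : Word d → ℂ) (Z : Fin d → (L2N →L[ℂ] L2N)) : L2N →L[ℂ] L2N :=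
  ∑' α : Word d, c α • wordProdO Z α

def IsStrictRowContractionO {d : ℕ} (Z : Fin d → (L2N →L[ℂ] L2N)) : Prop :=
  ∃ r : ℝ, r < 1 ∧
    ((r ^ 2 : ℂ) • (1 : L2N →L[ℂ] L2N)
      - ∑ i, Z i ∘L ContinuousLinearMap.adjoint (Z i)).IsPositive

/-- The singularity space `𝒮(f)`. -/
def SingSpace {d : ℕ} (f : Word d → ℂ) : Set (Fock d) :=
  {h | (∀ (n : ℕ) (Z : Fin d → Matrix (Fin n) (Fin n) ℂ) (y : Fin n → ℂ),
          IsStrictRowContraction Z → (evalM f Z)ᴴ *ᵥ y = 0 → (evalM (h ·) Z)ᴴ *ᵥ y = 0) ∧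
       (∀ (Z : Fin d → (L2N →L[ℂ] L2N)) (y : L2N),
          IsStrictRowContractionO Z → ContinuousLinearMap.adjoint (evalO f Z) y = 0 →
          ContinuousLinearMap.adjoint (evalO (h ·) Z) y = 0)}

def wordOp {d : ℕ} (R : Fin d → (Fock d →L[ℂ] Fock d)) (α : Word d) :
    Fock d →L[ℂ] Fock d :=
  (α.toList.map R).prod

/-- `f` is cyclic for the right creation operators. -/
def IsNCOuter {d : ℕ} (R : Fin d → (Fock d →L[ℂ] Fock d)) (f : Fock d) : Prop :=
  (Submodule.span ℂ {g : Fock d | ∃ α : Word d, g = wordOp R α f}).topologicalClosure = ⊤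

def IsNCInner {d : ℕ} (R : Fin d → (Fock d →L[ℂ] Fock d))
    (Θ : Fock d →L[ℂ] Fock d) : Prop :=
  (∀ x, ‖Θ x‖ = ‖x‖) ∧ ∀ i, Θ ∘L R i = R i ∘L Θ

namespace InvOutAux
open scoped ENNReal

open Finset
variable {d : ℕ}

def wl (γ : Word d) : ℕ := (FreeMonoid.toList γ).length
def tk (n : ℕ) (γ : Word d) : Word d := FreeMonoid.ofList ((FreeMonoid.toList γ).take n)
def dp (n : ℕ) (γ : Word d) : Word d := FreeMonoid.ofList ((FreeMonoid.toList γ).drop n)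

@[simp] lemma wl_mul (α β : Word d) : wl (α * β) = wl α + wl β := by
  simp [wl, FreeMonoid.toList_mul]

@[simp] lemma wl_one : wl (1 : Word d) = 0 := rfl

@[simp] lemma wl_of (i : Fin d) : wl (FreeMonoid.of i) = 1 := rfl

lemma eq_one_of_wl_zero {γ : Word d} (h : wl γ = 0) : γ = 1 := by
  apply FreeMonoid.toList.injective
  simpa [wl, List.length_eq_zero_iff] using h

@[simp] lemma tk_mul (α β : Word d) : tk (wl α) (α * β) = α := by
  apply FreeMonoid.toList.injective
  simp [tk, wl, FreeMonoid.toList_mul, List.take_left]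

@[simp] lemma dp_mul (α β : Word d) : dp (wl α) (α * β) = β := by
  apply FreeMonoid.toList.injective
  simp [dp, wl, FreeMonoid.toList_mul, List.drop_left]

lemma tk_mul_dp (n : ℕ) (γ : Word d) : tk n γ * dp n γ = γ := by
  apply FreeMonoid.toList.injective
  simp [tk, dp, FreeMonoid.toList_mul]

@[simp] lemma wl_dp (n : ℕ) (γ : Word d) : wl (dp n γ) = wl γ - n := by
  simp [wl, dp]

@[simp] lemma tk_zero (γ : Word d) : tk 0 γ = 1 := rfl

@[simp] lemma dp_zero (γ : Word d) : dp 0 γ = γ := by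
  apply FreeMonoid.toList.injective; simp [dp]

def sufCoef (f : Word d → ℂ) (μ γ : Word d) : ℂ :=
  if wl μ ≤ wl γ ∧ dp (wl γ - wl μ) γ = μ then f (tk (wl γ - wl μ) γ) else 0

lemma sufCoef_mul (f : Word d → ℂ) (α μ : Word d) : sufCoef f μ (α * μ) = f α := by
  have h1 : wl (α * μ) - wl μ = wl α := by simp
  rw [sufCoef, if_pos]
  · rw [h1, tk_mul]
  · exact ⟨by simp, by rw [h1, dp_mul]⟩

lemma sufCoef_eq_zero (f : Word d → ℂ) {μ γ : Word d} (h : ¬ ∃ α, γ = α * μ) :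
    sufCoef f μ γ = 0 := by
  rw [sufCoef, if_neg]
  rintro ⟨h1, h2⟩
  exact h ⟨tk (wl γ - wl μ) γ, by conv_lhs => rw [← tk_mul_dp (wl γ - wl μ) γ, h2]⟩

lemma sufCoef_one (f : Word d → ℂ) (γ : Word d) : sufCoef f 1 γ = f γ := by
  have := sufCoef_mul f γ 1
  rwa [mul_one] at this

lemma sufCoef_cancel_right (f : Word d → ℂ) (μ ν β : Word d) :
    sufCoef f (μ * ν) (β * ν) = sufCoef f μ β := by
  by_cases h : ∃ α, β = α * μ
  · obtain ⟨α, rfl⟩ := h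
    rw [sufCoef_mul, mul_assoc, sufCoef_mul]
  · rw [sufCoef_eq_zero _ h, sufCoef_eq_zero]
    rintro ⟨α, hα⟩
    rw [← mul_assoc] at hα
    exact h ⟨α, mul_right_cancel hα⟩


lemma wl_tk {n : ℕ} {γ : Word d} (h : n ≤ wl γ) : wl (tk n γ) = n := by
  simp only [wl, tk, FreeMonoid.toList_ofList, List.length_take]
  simp only [wl] at h; omega

def convCoef (r : ℝ) (g x : Word d → ℂ) (γ : Word d) : ℂ :=
  ∑ n ∈ Finset.range (wl γ + 1), (r : ℂ) ^ n * g (tk n γ) * x (dp n γ)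

lemma geom_partial_le {r : ℝ} (hr0 : 0 ≤ r) (hr1 : r < 1) (k : ℕ) :
    ∑ n ∈ range k, r ^ n ≤ (1 - r)⁻¹ := by
  have hpos : (0:ℝ) < 1 - r := by linarith
  rw [geom_sum_eq (ne_of_lt hr1)]
  have heq : (r ^ k - 1) / (r - 1) = (1 - r ^ k) / (1 - r) := by
    rw [← neg_sub (r ^ k) 1, ← neg_sub r 1, neg_div_neg_eq]
  rw [heq, div_le_iff₀ hpos, inv_mul_cancel₀ (ne_of_gt hpos)]
  have := pow_nonneg hr0 k
  linarith

lemma convCoef_sq_le {r : ℝ} (hr0 : 0 ≤ r) (hr1 : r < 1) (g x : Word d → ℂ) (γ : Word d) :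
    ‖convCoef r g x γ‖ ^ 2 ≤
      (1 - r)⁻¹ * ∑ n ∈ range (wl γ + 1), r ^ n * (‖g (tk n γ)‖ ^ 2 * ‖x (dp n γ)‖ ^ 2) := by
  set s := Real.sqrt r with hs
  have hss : s * s = r := Real.mul_self_sqrt hr0
  have h1 : ‖convCoef r g x γ‖ ≤
      ∑ n ∈ range (wl γ + 1), s ^ n * (s ^ n * (‖g (tk n γ)‖ * ‖x (dp n γ)‖)) := by
    refine (norm_sum_le _ _).trans (le_of_eq (Finset.sum_congr rfl fun n _ => ?_))
    rw [norm_mul, norm_mul, norm_pow, Complex.norm_real, Real.norm_eq_abs, abs_of_nonneg hr0]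
    rw [show ∀ a b : ℝ, s ^ n * (s ^ n * (a * b)) = (s ^ n * s ^ n) * (a * b) by intros; ring,
      ← mul_pow, hss]
    ring
  have h2 : ‖convCoef r g x γ‖ ^ 2 ≤
      (∑ n ∈ range (wl γ + 1), (s ^ n) ^ 2) *
      (∑ n ∈ range (wl γ + 1), (s ^ n * (‖g (tk n γ)‖ * ‖x (dp n γ)‖)) ^ 2) := by
    refine le_trans (pow_le_pow_left₀ (norm_nonneg _) h1 2) ?_
    exact Finset.sum_mul_sq_le_sq_mul_sq _ _ _
  have h3 : ∀ n, (s ^ n : ℝ) ^ 2 = r ^ n := by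
    intro n; rw [← pow_mul, mul_comm n 2, pow_mul, sq, hss]
  have h4 : ∑ n ∈ range (wl γ + 1), (s ^ n) ^ 2 ≤ (1 - r)⁻¹ := by
    simp only [h3]; exact geom_partial_le hr0 hr1 _
  refine h2.trans ?_
  have h5 : (∑ n ∈ range (wl γ + 1), (s ^ n * (‖g (tk n γ)‖ * ‖x (dp n γ)‖)) ^ 2)
      = ∑ n ∈ range (wl γ + 1), r ^ n * (‖g (tk n γ)‖ ^ 2 * ‖x (dp n γ)‖ ^ 2) := by
    refine Finset.sum_congr rfl fun n _ => ?_
    rw [mul_pow, h3, mul_pow]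
  rw [h5]
  exact mul_le_mul_of_nonneg_right h4 (by positivity)

lemma lp_sum_sq_le (y : Fock d) (A : Finset (Word d)) :
    ∑ γ ∈ A, ‖(y : Word d → ℂ) γ‖ ^ 2 ≤ ‖y‖ ^ 2 := by
  have h := lp.sum_rpow_le_norm_rpow (p := 2)
    (by rw [ENNReal.toReal_ofNat]; norm_num) y A
  rw [ENNReal.toReal_ofNat] at h
  have h2 : ∀ a : ℝ, a ^ (2 : ℝ) = a ^ (2 : ℕ) := fun a => by
    rw [show ((2 : ℝ) = ((2 : ℕ) : ℝ)) by norm_num, Real.rpow_natCast]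
  simpa [h2] using h

lemma convCoef_sum_le {r : ℝ} (hr0 : 0 ≤ r) (hr1 : r < 1) (g x : Fock d)
    (A : Finset (Word d)) :
    ∑ γ ∈ A, ‖convCoef r (g : Word d → ℂ) (x : Word d → ℂ) γ‖ ^ 2 ≤
      (1 - r)⁻¹ * (‖g‖ ^ 2 * ‖x‖ ^ 2) := by
  have step1 : ∑ γ ∈ A, ‖convCoef r (g : Word d → ℂ) (x : Word d → ℂ) γ‖ ^ 2 ≤
      (1 - r)⁻¹ * ∑ γ ∈ A, ∑ n ∈ range (wl γ + 1),
        r ^ n * (‖(g : Word d → ℂ) (tk n γ)‖ ^ 2 * ‖(x : Word d → ℂ) (dp n γ)‖ ^ 2) := by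
    rw [Finset.mul_sum]
    exact Finset.sum_le_sum fun γ _ => convCoef_sq_le hr0 hr1 _ _ γ
  refine step1.trans (mul_le_mul_of_nonneg_left ?_ (inv_nonneg.mpr (by linarith)))
  rw [Finset.sum_sigma']
  set S : Finset ((_ : Word d) × ℕ) := A.sigma fun γ => range (wl γ + 1) with hS
  have hbound : ∑ q ∈ S, r ^ q.2 *
      (‖(g : Word d → ℂ) (tk q.2 q.1)‖ ^ 2 * ‖(x : Word d → ℂ) (dp q.2 q.1)‖ ^ 2) ≤
      ∑ q ∈ S, ‖(g : Word d → ℂ) (tk q.2 q.1)‖ ^ 2 * ‖(x : Word d → ℂ) (dp q.2 q.1)‖ ^ 2 :=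
    Finset.sum_le_sum fun q _ =>
      mul_le_of_le_one_left (by positivity) (pow_le_one₀ hr0 (le_of_lt hr1))
  refine hbound.trans ?_
  set e : ((_ : Word d) × ℕ) → Word d × Word d := fun q => (tk q.2 q.1, dp q.2 q.1) with he
  have hinj : ∀ q ∈ S, ∀ q' ∈ S, e q = e q' → q = q' := by
    intro q hq q' hq' heq
    have h1 : tk q.2 q.1 = tk q'.2 q'.1 := congrArg Prod.fst heq
    have h2 : dp q.2 q.1 = dp q'.2 q'.1 := congrArg Prod.snd heq
    have hq1 : q.1 = q'.1 := by
      rw [← tk_mul_dp q.2 q.1, ← tk_mul_dp q'.2 q'.1, h1, h2]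
    have hq2 : q.2 = q'.2 := by
      have hm := (Finset.mem_sigma.mp hq).2
      have hm' := (Finset.mem_sigma.mp hq').2
      have l1 : q.2 ≤ wl q.1 := by have := Finset.mem_range.mp hm; omega
      have l2 : q'.2 ≤ wl q'.1 := by have := Finset.mem_range.mp hm'; omega
      have := congrArg wl h1
      rwa [wl_tk l1, wl_tk l2] at this
    exact Sigma.ext hq1 (heq_of_eq hq2)
  have himg : ∑ q ∈ S, ‖(g : Word d → ℂ) (tk q.2 q.1)‖ ^ 2 * ‖(x : Word d → ℂ) (dp q.2 q.1)‖ ^ 2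
      = ∑ p ∈ S.image e, ‖(g : Word d → ℂ) p.1‖ ^ 2 * ‖(x : Word d → ℂ) p.2‖ ^ 2 := by
    rw [Finset.sum_image hinj]
  rw [himg]
  have hsub : S.image e ⊆
      (S.image fun q => tk q.2 q.1) ×ˢ (S.image fun q => dp q.2 q.1) := by
    intro p hp
    obtain ⟨q, hq, rfl⟩ := Finset.mem_image.mp hp
    exact Finset.mem_product.mpr ⟨Finset.mem_image_of_mem _ hq, Finset.mem_image_of_mem _ hq⟩
  calc ∑ p ∈ S.image e, ‖(g : Word d → ℂ) p.1‖ ^ 2 * ‖(x : Word d → ℂ) p.2‖ ^ 2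
      ≤ ∑ p ∈ (S.image fun q => tk q.2 q.1) ×ˢ (S.image fun q => dp q.2 q.1),
          ‖(g : Word d → ℂ) p.1‖ ^ 2 * ‖(x : Word d → ℂ) p.2‖ ^ 2 :=
        Finset.sum_le_sum_of_subset_of_nonneg hsub (fun p _ _ => by positivity)
    _ = (∑ a ∈ S.image fun q => tk q.2 q.1, ‖(g : Word d → ℂ) a‖ ^ 2) *
        (∑ b ∈ S.image fun q => dp q.2 q.1, ‖(x : Word d → ℂ) b‖ ^ 2) := by
        rw [Finset.sum_product, Finset.sum_mul_sum]
    _ ≤ ‖g‖ ^ 2 * ‖x‖ ^ 2 :=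
        mul_le_mul (lp_sum_sq_le g _) (lp_sum_sq_le x _) (by positivity) (by positivity)


section Ops

lemma rpow_toReal_two (a : ℝ) : a ^ ((2 : ℝ≥0∞)).toReal = a ^ (2 : ℕ) := by
  rw [ENNReal.toReal_ofNat, show ((2 : ℝ) = ((2 : ℕ) : ℝ)) by norm_num, Real.rpow_natCast]

lemma mulFunMem {r : ℝ} (hr0 : 0 ≤ r) (hr1 : r < 1) (g x : Fock d) :
    Memℓp (convCoef r (g : Word d → ℂ) (x : Word d → ℂ)) 2 := by
  apply memℓp_gen' (C := (1 - r)⁻¹ * (‖g‖ ^ 2 * ‖x‖ ^ 2))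
  intro s
  simp only [rpow_toReal_two]
  exact convCoef_sum_le hr0 hr1 g x s

def mulFun {r : ℝ} (hr0 : 0 ≤ r) (hr1 : r < 1) (g x : Fock d) : Fock d :=
  ⟨convCoef r (g : Word d → ℂ) (x : Word d → ℂ), mulFunMem hr0 hr1 g x⟩

@[simp] lemma mulFun_apply {r : ℝ} (hr0 : 0 ≤ r) (hr1 : r < 1) (g x : Fock d) (γ : Word d) :
    (mulFun hr0 hr1 g x : Word d → ℂ) γ = convCoef r (g : Word d → ℂ) (x : Word d → ℂ) γ := rfl

lemma mulFun_norm_le {r : ℝ} (hr0 : 0 ≤ r) (hr1 : r < 1) (g x : Fock d) :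
    ‖mulFun hr0 hr1 g x‖ ≤ Real.sqrt (1 - r)⁻¹ * ‖g‖ * ‖x‖ := by
  have h1r : (0:ℝ) < 1 - r := by linarith
  refine lp.norm_le_of_forall_sum_le (by rw [ENNReal.toReal_ofNat]; norm_num)
    (by positivity) (fun s => ?_)
  simp only [rpow_toReal_two]
  refine (convCoef_sum_le hr0 hr1 g x s).trans (le_of_eq ?_)
  rw [mul_pow, mul_pow, Real.sq_sqrt (by positivity)]
  ring

def mulOpLin {r : ℝ} (hr0 : 0 ≤ r) (hr1 : r < 1) (g : Fock d) : Fock d →ₗ[ℂ] Fock d where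
  toFun x := mulFun hr0 hr1 g x
  map_add' x y := by
    apply lp.ext; funext γ
    have h2 : ((mulFun hr0 hr1 g x + mulFun hr0 hr1 g y : Fock d) : Word d → ℂ) γ
        = (mulFun hr0 hr1 g x : Word d → ℂ) γ + (mulFun hr0 hr1 g y : Word d → ℂ) γ := by
      rw [lp.coeFn_add]; rfl
    show (mulFun hr0 hr1 g (x + y) : Word d → ℂ) γ = _
    rw [h2, mulFun_apply, mulFun_apply, mulFun_apply, convCoef, convCoef, convCoef,
      ← Finset.sum_add_distrib]
    refine Finset.sum_congr rfl fun n _ => ?_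
    rw [show ((x + y : Fock d) : Word d → ℂ) (dp n γ)
        = (x : Word d → ℂ) (dp n γ) + (y : Word d → ℂ) (dp n γ) from by rw [lp.coeFn_add]; rfl]
    ring
  map_smul' c x := by
    apply lp.ext; funext γ
    simp only [RingHom.id_apply]
    have h2 : ((c • mulFun hr0 hr1 g x : Fock d) : Word d → ℂ) γ
        = c * (mulFun hr0 hr1 g x : Word d → ℂ) γ := by rw [lp.coeFn_smul]; rfl
    show (mulFun hr0 hr1 g (c • x) : Word d → ℂ) γ = _
    rw [h2, mulFun_apply, mulFun_apply, convCoef, convCoef, Finset.mul_sum]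
    refine Finset.sum_congr rfl fun n _ => ?_
    rw [show ((c • x : Fock d) : Word d → ℂ) (dp n γ)
        = c * (x : Word d → ℂ) (dp n γ) from by rw [lp.coeFn_smul]; rfl]
    ring

def mulOp {r : ℝ} (hr0 : 0 ≤ r) (hr1 : r < 1) (g : Fock d) : Fock d →L[ℂ] Fock d :=
  (mulOpLin hr0 hr1 g).mkContinuous (Real.sqrt (1 - r)⁻¹ * ‖g‖) (fun x => by
    exact mulFun_norm_le hr0 hr1 g x)

lemma mulOp_norm_le {r : ℝ} (hr0 : 0 ≤ r) (hr1 : r < 1) (g : Fock d) :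
    ‖mulOp hr0 hr1 g‖ ≤ Real.sqrt (1 - r)⁻¹ * ‖g‖ :=
  LinearMap.mkContinuous_norm_le _ (by positivity) _

@[simp] lemma mulOp_coeff {r : ℝ} (hr0 : 0 ≤ r) (hr1 : r < 1) (g x : Fock d) (γ : Word d) :
    (mulOp hr0 hr1 g x : Word d → ℂ) γ = convCoef r (g : Word d → ℂ) (x : Word d → ℂ) γ := rfl

def coeffCLM (γ : Word d) : Fock d →L[ℂ] ℂ :=
  LinearMap.mkContinuous
    { toFun := fun x => (x : Word d → ℂ) γ
      map_add' := fun x y => by simpa using congrFun (lp.coeFn_add x y) γ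
      map_smul' := fun c x => by simpa using congrFun (lp.coeFn_smul c x) γ }
    1 (fun x => by rw [one_mul]; exact lp.norm_apply_le_norm (by norm_num) x γ)

@[simp] lemma coeffCLM_apply (γ : Word d) (x : Fock d) : coeffCLM γ x = (x : Word d → ℂ) γ := rfl

@[simp] lemma basis_self (γ : Word d) : (fockBasis d γ : Word d → ℂ) γ = 1 :=
  lp.single_apply_self 2 γ 1

lemma basis_ne {γ δ : Word d} (h : δ ≠ γ) : (fockBasis d γ : Word d → ℂ) δ = 0 :=
  lp.single_apply_ne 2 γ 1 h

lemma inner_basis (γ : Word d) (y : Fock d) :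
    (inner ℂ (fockBasis d γ) y : ℂ) = (y : Word d → ℂ) γ := by
  rw [lp.inner_single_left]
  simp [RCLike.inner_apply]

lemma clm_ext_basis {F : Type*} [NormedAddCommGroup F] [NormedSpace ℂ F]
    {A B : Fock d →L[ℂ] F} (h : ∀ γ, A (fockBasis d γ) = B (fockBasis d γ)) : A = B := by
  ext x
  have hs := lp.hasSum_single ENNReal.ofNat_ne_top x
  have h1 : ∀ γ : Word d, lp.single 2 γ ((x : Word d → ℂ) γ)
      = ((x : Word d → ℂ) γ) • fockBasis d γ := by
    intro γ
    apply lp.ext; funext δ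
    by_cases hd : δ = γ
    · subst hd
      rw [lp.coeFn_smul]
      simp [lp.single_apply_self]
    · rw [lp.coeFn_smul]
      simp [lp.single_apply_ne 2 _ _ hd, Pi.single_apply, hd]
  have hA : HasSum (fun γ : Word d => ((x : Word d → ℂ) γ) • A (fockBasis d γ)) (A x) := by
    have := ContinuousLinearMap.hasSum A hs
    simpa [h1, _root_.map_smul] using this
  have hB : HasSum (fun γ : Word d => ((x : Word d → ℂ) γ) • B (fockBasis d γ)) (B x) := by
    have := ContinuousLinearMap.hasSum B hs
    simpa [h1, _root_.map_smul] using this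
  simp only [h] at hA
  exact hA.unique hB

end Ops


section Main

lemma convCoef_basis (r : ℝ) (g : Word d → ℂ) (β γ : Word d) :
    convCoef r g ((fockBasis d β : Fock d) : Word d → ℂ) γ
      = sufCoef (fun α => (r : ℂ) ^ wl α * g α) β γ := by
  by_cases h : ∃ α, γ = α * β
  · obtain ⟨α, rfl⟩ := h
    rw [sufCoef_mul, convCoef]
    have hsingle : ∑ n ∈ Finset.range (wl (α * β) + 1),
        (r : ℂ) ^ n * g (tk n (α * β)) * ((fockBasis d β : Fock d) : Word d → ℂ) (dp n (α * β))
        = (r : ℂ) ^ (wl α) * g (tk (wl α) (α * β))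
            * ((fockBasis d β : Fock d) : Word d → ℂ) (dp (wl α) (α * β)) := by
      refine Finset.sum_eq_single_of_mem (wl α)
        (Finset.mem_range.mpr (by rw [wl_mul]; omega)) (fun n hn hne => ?_)
      rw [basis_ne, mul_zero]
      intro hEq
      apply hne
      have h2 := congrArg wl hEq
      rw [wl_dp, wl_mul] at h2
      rw [Finset.mem_range, wl_mul] at hn
      omega
    rw [hsingle, tk_mul, dp_mul, basis_self, mul_one]
  · rw [sufCoef_eq_zero _ h, convCoef]
    refine Finset.sum_eq_zero fun n hn => ?_
    rw [basis_ne, mul_zero]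
    intro hEq
    exact h ⟨tk n γ, by conv_lhs => rw [← tk_mul_dp n γ, hEq]⟩

lemma mulOp_sub {r : ℝ} (hr0 : 0 ≤ r) (hr1 : r < 1) (g h : Fock d) :
    mulOp hr0 hr1 (g - h) = mulOp hr0 hr1 g - mulOp hr0 hr1 h := by
  refine ContinuousLinearMap.ext fun x => ?_
  apply lp.ext; funext γ
  rw [ContinuousLinearMap.sub_apply]
  have h2 : ((mulOp hr0 hr1 g x - mulOp hr0 hr1 h x : Fock d) : Word d → ℂ) γ
      = (mulOp hr0 hr1 g x : Word d → ℂ) γ - (mulOp hr0 hr1 h x : Word d → ℂ) γ := by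
    rw [lp.coeFn_sub]; rfl
  rw [h2, mulOp_coeff, mulOp_coeff, mulOp_coeff, convCoef, convCoef, convCoef,
    ← Finset.sum_sub_distrib]
  refine Finset.sum_congr rfl fun n _ => ?_
  rw [show ((g - h : Fock d) : Word d → ℂ) (tk n γ)
      = (g : Word d → ℂ) (tk n γ) - (h : Word d → ℂ) (tk n γ) from by rw [lp.coeFn_sub]; rfl]
  ring

lemma mulOp_one {r : ℝ} (hr0 : 0 ≤ r) (hr1 : r < 1) :
    mulOp hr0 hr1 (fockBasis d 1) = (1 : Fock d →L[ℂ] Fock d) := by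
  apply clm_ext_basis; intro β
  apply lp.ext; funext γ
  rw [mulOp_coeff, convCoef_basis, ContinuousLinearMap.one_apply]
  by_cases h : ∃ α, γ = α * β
  · obtain ⟨α, rfl⟩ := h
    rw [sufCoef_mul]
    by_cases hα : α = (1 : Word d)
    · subst hα
      rw [wl_one, pow_zero, basis_self, show ((1 : Word d) * β) = β from one_mul β, basis_self]
      exact one_mul 1
    · rw [basis_ne hα, mul_zero, basis_ne]
      intro hEq
      exact hα (mul_right_cancel (hEq.trans (one_mul β).symm))
  · rw [sufCoef_eq_zero _ h, basis_ne]
    intro hEq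
    exact h ⟨1, hEq.trans (one_mul β).symm⟩

def toFock (p : Word d →₀ ℂ) : Fock d :=
  ⟨fun γ => p γ, memℓp_gen (by
    refine summable_of_ne_finset_zero (s := p.support) fun γ hγ => ?_
    rw [Finsupp.notMem_support_iff.mp hγ, norm_zero, ENNReal.toReal_ofNat]
    exact Real.zero_rpow (by norm_num))⟩

@[simp] lemma toFock_apply (p : Word d →₀ ℂ) (γ : Word d) :
    (toFock p : Word d → ℂ) γ = p γ := rfl

lemma comp_eq {r : ℝ} (hr0 : 0 ≤ r) (hr1 : r < 1) (f : Fock d) (p : Word d →₀ ℂ)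
    (v : Fock d)
    (hv : ∀ γ, (v : Word d → ℂ) γ = p.sum fun μ c => c * sufCoef (f : Word d → ℂ) μ γ) :
    (mulOp hr0 hr1 f) ∘L (mulOp hr0 hr1 (toFock p)) = mulOp hr0 hr1 v := by
  apply clm_ext_basis; intro β
  rw [ContinuousLinearMap.comp_apply]
  have step1 : mulOp hr0 hr1 (toFock p) (fockBasis d β)
      = ∑ μ ∈ p.support, ((r : ℂ) ^ wl μ * p μ) • fockBasis d (μ * β) := by
    apply lp.ext; funext γ
    rw [mulOp_coeff, convCoef_basis]
    have hsum : ((∑ μ ∈ p.support, ((r : ℂ) ^ wl μ * p μ) • fockBasis d (μ * β) : Fock d)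
          : Word d → ℂ) γ
        = ∑ μ ∈ p.support, ((r : ℂ) ^ wl μ * p μ) * (fockBasis d (μ * β) : Word d → ℂ) γ := by
      have hmap := map_sum (coeffCLM γ)
        (fun μ => ((r : ℂ) ^ wl μ * p μ) • fockBasis d (μ * β)) p.support
      simp only [coeffCLM_apply] at hmap
      rw [hmap]
      refine Finset.sum_congr rfl fun μ _ => ?_
      rw [show (((((r : ℂ) ^ wl μ * p μ) • fockBasis d (μ * β)) : Fock d) : Word d → ℂ) γ
          = ((r : ℂ) ^ wl μ * p μ) * (fockBasis d (μ * β) : Word d → ℂ) γ from by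
        rw [lp.coeFn_smul]; rfl]
    rw [hsum]
    by_cases h : ∃ α, γ = α * β
    · obtain ⟨α, rfl⟩ := h
      rw [sufCoef_mul, toFock_apply]
      have hterm : ∀ μ : Word d, ((r : ℂ) ^ wl μ * p μ) * (fockBasis d (μ * β) : Word d → ℂ) (α * β)
          = if α = μ then (r : ℂ) ^ wl μ * p μ else 0 := by
        intro μ
        by_cases hm : α = μ
        · subst hm; rw [basis_self, mul_one, if_pos rfl]
        · rw [basis_ne (fun hEq => hm (mul_right_cancel hEq)), mul_zero, if_neg hm]
      simp only [hterm]
      rw [Finset.sum_ite_eq]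
      by_cases hs : α ∈ p.support
      · rw [if_pos hs]
      · rw [if_neg hs, Finsupp.notMem_support_iff.mp hs, mul_zero]
    · rw [sufCoef_eq_zero _ h]
      refine (Finset.sum_eq_zero fun μ _ => ?_).symm
      rw [basis_ne (fun hEq => h ⟨μ, hEq⟩), mul_zero]
  rw [step1, map_sum]
  apply lp.ext; funext γ
  have hL : ((∑ μ ∈ p.support,
        mulOp hr0 hr1 f (((r : ℂ) ^ wl μ * p μ) • fockBasis d (μ * β)) : Fock d) : Word d → ℂ) γ
      = ∑ μ ∈ p.support, ((r : ℂ) ^ wl μ * p μ)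
          * sufCoef (fun α => (r : ℂ) ^ wl α * (f : Word d → ℂ) α) (μ * β) γ := by
    have hmap := map_sum (coeffCLM γ)
      (fun μ => mulOp hr0 hr1 f (((r : ℂ) ^ wl μ * p μ) • fockBasis d (μ * β))) p.support
    simp only [coeffCLM_apply] at hmap
    rw [hmap]
    refine Finset.sum_congr rfl fun μ _ => ?_
    rw [_root_.map_smul]
    rw [show (((((r : ℂ) ^ wl μ * p μ) • mulOp hr0 hr1 f (fockBasis d (μ * β))) : Fock d)
        : Word d → ℂ) γ
        = ((r : ℂ) ^ wl μ * p μ) * (mulOp hr0 hr1 f (fockBasis d (μ * β)) : Word d → ℂ) γ from by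
      rw [lp.coeFn_smul]; rfl]
    rw [mulOp_coeff, convCoef_basis]
  rw [hL, mulOp_coeff, convCoef_basis]
  by_cases h : ∃ α, γ = α * β
  · obtain ⟨α, rfl⟩ := h
    rw [sufCoef_mul, hv α, Finsupp.sum, Finset.mul_sum]
    refine Finset.sum_congr rfl fun μ hμ => ?_
    rw [sufCoef_cancel_right]
    by_cases hα : ∃ α', α = α' * μ
    · obtain ⟨α', rfl⟩ := hα
      rw [sufCoef_mul, sufCoef_mul, wl_mul, pow_add]
      ring
    · rw [sufCoef_eq_zero _ hα, sufCoef_eq_zero _ hα, mul_zero, mul_zero, mul_zero]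
  · rw [sufCoef_eq_zero _ h]
    refine Finset.sum_eq_zero fun μ _ => ?_
    rw [sufCoef_eq_zero, mul_zero]
    rintro ⟨δ, hδ⟩
    rw [← mul_assoc] at hδ
    exact h ⟨δ * μ, hδ⟩

lemma coe_zero (γ : Word d) : ((0 : Fock d) : Word d → ℂ) γ = 0 := by
  rw [lp.coeFn_zero (fun _ : Word d => ℂ) 2]; rfl

lemma mulOp_inj {r : ℝ} (hr0 : 0 ≤ r) (hr1 : r < 1) (f : Fock d)
    (hf1 : (f : Word d → ℂ) 1 ≠ 0) (x : Fock d)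
    (hx : mulOp hr0 hr1 f x = 0) : x = 0 := by
  classical
  by_contra hne
  have hex : ∃ n : ℕ, ∃ β, wl β = n ∧ (x : Word d → ℂ) β ≠ 0 := by
    by_contra hall
    push_neg at hall
    refine hne (lp.ext (funext fun β => ?_))
    rw [hall (wl β) β rfl]
    exact (coe_zero β).symm
  obtain ⟨β₀, hβ₀len, hβ₀⟩ := Nat.find_spec hex
  have hmin : ∀ β : Word d, wl β < Nat.find hex → (x : Word d → ℂ) β = 0 := by
    intro β hβ
    by_contra hb
    exact Nat.find_min hex hβ ⟨β, rfl, hb⟩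
  have h0 : ((mulOp hr0 hr1 f x : Fock d) : Word d → ℂ) β₀ = 0 := by
    rw [hx]; exact coe_zero β₀
  rw [mulOp_coeff, convCoef] at h0
  have hsingle : ∑ n ∈ Finset.range (wl β₀ + 1),
      (r : ℂ) ^ n * (f : Word d → ℂ) (tk n β₀) * (x : Word d → ℂ) (dp n β₀)
      = (r : ℂ) ^ 0 * (f : Word d → ℂ) (tk 0 β₀) * (x : Word d → ℂ) (dp 0 β₀) := by
    refine Finset.sum_eq_single_of_mem 0 (Finset.mem_range.mpr (by omega)) fun n hn hne0 => ?_
    rw [hmin (dp n β₀) ?_, mul_zero]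
    rw [wl_dp, hβ₀len]
    have := Finset.mem_range.mp hn
    rw [← hβ₀len]
    omega
  rw [hsingle, pow_zero, one_mul, tk_zero, dp_zero] at h0
  rcases mul_eq_zero.mp h0 with h | h
  · exact hf1 h
  · exact hβ₀ h

end Main


section Outer

lemma ofList_reverse_cons (i : Fin d) (l : List (Fin d)) :
    FreeMonoid.ofList ((i :: l).reverse) = FreeMonoid.ofList l.reverse * FreeMonoid.of i := by
  apply FreeMonoid.toList.injective
  simp [FreeMonoid.toList_mul, List.reverse_cons]

lemma R_coeff (R : Fin d → (Fock d →L[ℂ] Fock d))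
    (hR : ∀ (i : Fin d) (α : Word d), R i (fockBasis d α) = fockBasis d (α * FreeMonoid.of i))
    (i : Fin d) (γ : Word d) (y : Fock d) :
    ((R i y : Fock d) : Word d → ℂ) γ = sufCoef (y : Word d → ℂ) (FreeMonoid.of i) γ := by
  by_cases hγ : ∃ β', γ = β' * FreeMonoid.of i
  · obtain ⟨β', rfl⟩ := hγ
    have key : (coeffCLM (β' * FreeMonoid.of i)) ∘L (R i) = coeffCLM β' := by
      apply clm_ext_basis; intro δ
      rw [ContinuousLinearMap.comp_apply, coeffCLM_apply, coeffCLM_apply, hR i δ]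
      by_cases hd : δ = β'
      · subst hd; rw [basis_self, basis_self]
      · rw [basis_ne (fun hEq => hd (mul_right_cancel hEq).symm), basis_ne (fun hEq => hd hEq.symm)]
    have happ := congrArg (fun A : Fock d →L[ℂ] ℂ => A y) key
    simp only [ContinuousLinearMap.comp_apply, coeffCLM_apply] at happ
    rw [happ, sufCoef_mul]
  · rw [sufCoef_eq_zero _ hγ]
    have key : (coeffCLM γ) ∘L (R i) = 0 := by
      apply clm_ext_basis; intro δ
      rw [ContinuousLinearMap.comp_apply, coeffCLM_apply, hR i δ,
        ContinuousLinearMap.zero_apply]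
      exact basis_ne (fun hEq => hγ ⟨δ, hEq⟩)
    have happ := congrArg (fun A : Fock d →L[ℂ] ℂ => A y) key
    simp only [ContinuousLinearMap.comp_apply, coeffCLM_apply,
      ContinuousLinearMap.zero_apply] at happ
    rw [happ]

lemma wordOp_coeff (R : Fin d → (Fock d →L[ℂ] Fock d))
    (hR : ∀ (i : Fin d) (α : Word d), R i (fockBasis d α) = fockBasis d (α * FreeMonoid.of i))
    (l : List (Fin d)) (x : Fock d) (γ : Word d) :
    (((l.map R).prod x : Fock d) : Word d → ℂ) γ
      = sufCoef (x : Word d → ℂ) (FreeMonoid.ofList l.reverse) γ := by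
  induction l generalizing γ with
  | nil =>
      rw [List.map_nil, List.prod_nil, ContinuousLinearMap.one_apply]
      exact (sufCoef_one _ γ).symm
  | cons i l ih =>
      rw [List.map_cons, List.prod_cons, ContinuousLinearMap.mul_apply]
      rw [R_coeff R hR i γ (((l.map R).prod) x), ofList_reverse_cons]
      by_cases hγ : ∃ β', γ = β' * FreeMonoid.of i
      · obtain ⟨β', rfl⟩ := hγ
        rw [sufCoef_mul, ih β', sufCoef_cancel_right]
      · rw [sufCoef_eq_zero _ hγ, sufCoef_eq_zero]
        rintro ⟨α, hα⟩
        rw [← mul_assoc] at hα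
        exact hγ ⟨α * FreeMonoid.ofList l.reverse, hα⟩

lemma span_rep (R : Fin d → (Fock d →L[ℂ] Fock d))
    (hR : ∀ (i : Fin d) (α : Word d), R i (fockBasis d α) = fockBasis d (α * FreeMonoid.of i))
    (f : Fock d) {v : Fock d}
    (hv : v ∈ Submodule.span ℂ {g : Fock d | ∃ α : Word d, g = wordOp R α f}) :
    ∃ p : Word d →₀ ℂ, ∀ γ, (v : Word d → ℂ) γ
      = p.sum fun μ c => c * sufCoef (f : Word d → ℂ) μ γ := by
  induction hv using Submodule.span_induction with
  | mem g hg =>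
      obtain ⟨α, rfl⟩ := hg
      refine ⟨Finsupp.single (FreeMonoid.ofList (FreeMonoid.toList α).reverse) 1, fun γ => ?_⟩
      rw [Finsupp.sum_single_index (by rw [zero_mul]), one_mul]
      exact wordOp_coeff R hR (FreeMonoid.toList α) f γ
  | zero =>
      exact ⟨0, fun γ => by rw [Finsupp.sum_zero_index]; exact coe_zero γ⟩
  | add x y hx hy ihx ihy =>
      obtain ⟨p, hp⟩ := ihx; obtain ⟨q, hq⟩ := ihy
      refine ⟨p + q, fun γ => ?_⟩
      rw [Finsupp.sum_add_index' (fun a => by rw [zero_mul]) (fun a b c => by rw [add_mul]),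
        ← hp γ, ← hq γ]
      rw [show ((x + y : Fock d) : Word d → ℂ) γ
          = (x : Word d → ℂ) γ + (y : Word d → ℂ) γ from by rw [lp.coeFn_add]; rfl]
  | smul c x hx ihx =>
      obtain ⟨p, hp⟩ := ihx
      refine ⟨c • p, fun γ => ?_⟩
      rw [Finsupp.sum_smul_index (fun i => by rw [zero_mul])]
      rw [show ((c • x : Fock d) : Word d → ℂ) γ = c * (x : Word d → ℂ) γ from by
        rw [lp.coeFn_smul]; rfl]
      rw [hp γ, Finsupp.mul_sum]
      refine Finsupp.sum_congr fun μ _ => ?_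
      ring

lemma f_one_ne (R : Fin d → (Fock d →L[ℂ] Fock d))
    (hR : ∀ (i : Fin d) (α : Word d), R i (fockBasis d α) = fockBasis d (α * FreeMonoid.of i))
    (f : Fock d) (hf : IsNCOuter R f) : (f : Word d → ℂ) 1 ≠ 0 := by
  intro h0
  have hsub : Submodule.span ℂ {g : Fock d | ∃ α : Word d, g = wordOp R α f}
      ≤ (coeffCLM (d := d) 1).ker := by
    rw [Submodule.span_le]
    rintro g ⟨α, rfl⟩
    simp only [SetLike.mem_coe, LinearMap.mem_ker]
    show ((((FreeMonoid.toList α).map R).prod f : Fock d) : Word d → ℂ) 1 = 0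
    rw [wordOp_coeff R hR (FreeMonoid.toList α) f 1]
    by_cases hμ : FreeMonoid.ofList (FreeMonoid.toList α).reverse = (1 : Word d)
    · rw [hμ, sufCoef_one]; exact h0
    · refine sufCoef_eq_zero _ ?_
      rintro ⟨β, hβ⟩
      have hwl := congrArg wl hβ
      rw [wl_one, wl_mul] at hwl
      exact hμ (eq_one_of_wl_zero (by omega))
  have htop : (⊤ : Submodule ℂ (Fock d)) ≤ (coeffCLM (d := d) 1).ker := by
    rw [← hf]
    exact Submodule.topologicalClosure_minimal _ hsub (ContinuousLinearMap.isClosed_ker _)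
  have h1 : fockBasis d 1 ∈ (coeffCLM (d := d) 1).ker :=
    htop Submodule.mem_top
  rw [LinearMap.mem_ker, ContinuousLinearMap.coe_coe, coeffCLM_apply, basis_self] at h1
  exact one_ne_zero h1

lemma outer_approx (R : Fin d → (Fock d →L[ℂ] Fock d)) (f : Fock d)
    (hf : IsNCOuter R f) {ε : ℝ} (hε : 0 < ε) :
    ∃ v ∈ Submodule.span ℂ {g : Fock d | ∃ α : Word d, g = wordOp R α f},
      ‖fockBasis d 1 - v‖ < ε := by
  have h1 : (fockBasis d 1 : Fock d) ∈
      closure ((Submodule.span ℂ {g : Fock d | ∃ α : Word d, g = wordOp R α f} : Submodule ℂ (Fock d)) : Set (Fock d)) := by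
    rw [← Submodule.topologicalClosure_coe, hf]
    simp
  rw [Metric.mem_closure_iff] at h1
  obtain ⟨v, hv, hdist⟩ := h1 ε hε
  exact ⟨v, hv, by rwa [dist_eq_norm] at hdist⟩

end Outer

end InvOutAux

/-- **Invertibility of the rescaled left multiplier of an NC outer function**
(Theorem `InvOut`).  If `f ∈ F²_d` is NC outer, `0 ≤ r < 1`, and `T` acts as left
multiplication by the `r`-rescaled power series of `f` (matrix coefficients
`⟪e_{αβ}, T e_β⟫ = r^{|α|} f(α)`, all other matrix entries zero), then `T` is
invertible in the bounded operators on `F²_d`. -/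
theorem rescaled_outer_multiplier_invertible {d : ℕ} (hd : 1 ≤ d)
    (R : Fin d → (Fock d →L[ℂ] Fock d))
    (hR : ∀ (i : Fin d) (α : Word d), R i (fockBasis d α) = fockBasis d (α * FreeMonoid.of i))
    (f : Fock d) (hf : IsNCOuter R f) (r : ℝ) (hr0 : 0 ≤ r) (hr1 : r < 1)
    (T : Fock d →L[ℂ] Fock d)
    (hT : ∀ α β : Word d,
      (inner ℂ (fockBasis d (α * β)) (T (fockBasis d β)) : ℂ)
        = (r : ℂ) ^ (FreeMonoid.toList α).length * f α)
    (hT0 : ∀ β γ : Word d, (¬ ∃ α : Word d, γ = α * β) →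
      (inner ℂ (fockBasis d γ) (T (fockBasis d β)) : ℂ) = 0) :
    IsUnit T := by
  classical
  have h1r : (0 : ℝ) < 1 - r := by linarith
  -- T is the convolution operator by (the r-rescaling of) f
  have hTeq : T = InvOutAux.mulOp hr0 hr1 f := by
    apply InvOutAux.clm_ext_basis; intro β
    apply lp.ext; funext γ
    rw [InvOutAux.mulOp_coeff, InvOutAux.convCoef_basis]
    by_cases h : ∃ α : Word d, γ = α * β
    · obtain ⟨α, rfl⟩ := h
      rw [show ((T (fockBasis d β) : Fock d) : Word d → ℂ) (α * β)
          = inner ℂ (fockBasis d (α * β)) (T (fockBasis d β)) from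
        (InvOutAux.inner_basis _ _).symm]
      rw [hT α β, InvOutAux.sufCoef_mul]
      rfl
    · rw [show ((T (fockBasis d β) : Fock d) : Word d → ℂ) γ
          = inner ℂ (fockBasis d γ) (T (fockBasis d β)) from
        (InvOutAux.inner_basis _ _).symm]
      rw [hT0 β γ h, InvOutAux.sufCoef_eq_zero _ h]
  -- choose a good polynomial approximation from outerness
  obtain ⟨v, hvmem, hvnorm⟩ :=
    InvOutAux.outer_approx R f hf (Real.sqrt_pos.mpr h1r)
  obtain ⟨p, hp⟩ := InvOutAux.span_rep R hR f hvmem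
  set B := InvOutAux.mulOp hr0 hr1 (InvOutAux.toFock p) with hB
  have hcomp : T * B = InvOutAux.mulOp hr0 hr1 v := by
    rw [ContinuousLinearMap.mul_def, hTeq, hB]
    exact InvOutAux.comp_eq hr0 hr1 f p v hp
  have hsmall : ‖1 - T * B‖ < 1 := by
    rw [hcomp, ← InvOutAux.mulOp_one (d := d) hr0 hr1,
      ← InvOutAux.mulOp_sub hr0 hr1 (fockBasis d 1) v]
    refine lt_of_le_of_lt (InvOutAux.mulOp_norm_le hr0 hr1 _) ?_
    have hCs : (0 : ℝ) < Real.sqrt (1 - r)⁻¹ := Real.sqrt_pos.mpr (by positivity)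
    calc Real.sqrt (1 - r)⁻¹ * ‖fockBasis d 1 - v‖
        < Real.sqrt (1 - r)⁻¹ * Real.sqrt (1 - r) := mul_lt_mul_of_pos_left hvnorm hCs
      _ = 1 := by
          rw [Real.sqrt_inv]
          exact inv_mul_cancel₀ (ne_of_gt (Real.sqrt_pos.mpr h1r))
  set u : (Fock d →L[ℂ] Fock d)ˣ := Units.oneSub (1 - T * B) hsmall with hu
  have huval : (u : Fock d →L[ℂ] Fock d) = T * B := by
    show 1 - (1 - T * B) = T * B
    exact sub_sub_cancel 1 (T * B)
  set C : Fock d →L[ℂ] Fock d := B * (↑u⁻¹ : Fock d →L[ℂ] Fock d) with hC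
  have hTC : T * C = 1 := by
    rw [hC, ← mul_assoc, ← huval]
    exact u.mul_inv
  have hTinj : ∀ y : Fock d, T y = 0 → y = 0 := by
    intro y hy
    refine InvOutAux.mulOp_inj hr0 hr1 f (InvOutAux.f_one_ne R hR f hf) y ?_
    rw [← hTeq]; exact hy
  have hCT : C * T = 1 := by
    refine ContinuousLinearMap.ext fun y => ?_
    have hTy : T ((C * T) y - y) = 0 := by
      have h2 : T ((C * T) y) = T y := by
        rw [ContinuousLinearMap.mul_apply]
        calc T (C (T y)) = (T * C) (T y) := (ContinuousLinearMap.mul_apply T C (T y)).symm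
          _ = T y := by rw [hTC, ContinuousLinearMap.one_apply]
      rw [map_sub, h2, sub_self]
    have h3 := sub_eq_zero.mp (hTinj _ hTy)
    rw [ContinuousLinearMap.one_apply]
    exact h3
  exact ⟨⟨T, C, hTC, hCT⟩, rfl⟩
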